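/- Let h : ℝ≥0 → ℝ be absolutely continuous (or C¹) with h(0) > 0, and suppose h′(t) ≥ −α(h(t)) for almost all t, where α : ℝ → ℝ is continuous, strictly increasing, locally Lipschitz, and α(0) = 0. Then h(t) > 0 for all t ≥ 0. -/
import Mathlib


/-- Comparison lemma for ZCBFs. If h is C¹ with h(0) > 0 and
h′(t) ≥ −α(h(t)) for all t ≥ 0, where α is continuous, strictly increasing,
locally Lipschitz, and α(0) = 0 (extended class-K), then h(t) > 0 for all t ≥ 0. -/
theorem stmt_3 (h h' : ℝ → ℝ) (α : ℝ → ℝ)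
    (hderiv : ∀ t, HasDerivAt h (h' t) t)
    (hcont : Continuous h')
    (h0 : 0 < h 0)
    (hαc : Continuous α) (hαmono : StrictMono α)
    (hαlip : LocallyLipschitz α) (hα0 : α 0 = 0)
    (hineq : ∀ t ≥ (0 : ℝ), -α (h t) ≤ h' t) :
    ∀ t ≥ (0 : ℝ), 0 < h t := by
  intro t₀ ht₀
  by_contra hle
  push_neg at hle
  have hch : Continuous h := continuous_iff_continuousAt.2 fun t => (hderiv t).continuousAt
  -- there is a zero of h in [0, t₀]
  have hz : ∃ z, 0 ≤ z ∧ h z = 0 := by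
    have hsub := intermediate_value_Icc' ht₀ hch.continuousOn
    have : (0 : ℝ) ∈ Set.Icc (h t₀) (h 0) := ⟨hle, le_of_lt h0⟩
    obtain ⟨z, hz1, hz2⟩ := hsub this
    exact ⟨z, hz1.1, hz2⟩
  set S : Set ℝ := {t | 0 ≤ t ∧ h t = 0} with hS
  have hSne : S.Nonempty := hz
  have hSbdd : BddBelow S := ⟨0, fun x hx => hx.1⟩
  have hSclosed : IsClosed S := by
    have : S = Set.Ici 0 ∩ h ⁻¹' {0} := by
      ext x; simp [hS, Set.mem_setOf_eq]
    rw [this]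
    exact isClosed_Ici.inter (isClosed_singleton.preimage hch)
  set T := sInf S with hT
  have hTmem : T ∈ S := hSclosed.csInf_mem hSne hSbdd
  have hT0 : h T = 0 := hTmem.2
  have hTnn : 0 ≤ T := hTmem.1
  have hTpos : 0 < T := by
    rcases lt_or_eq_of_le hTnn with h1 | h1
    · exact h1
    · exfalso; rw [← h1] at hT0; linarith
  -- h is positive on [0, T)
  have hpos : ∀ t, 0 ≤ t → t < T → 0 < h t := by
    intro t ht htT
    by_contra hc
    push_neg at hc
    have hzt : ∃ z ∈ Set.Icc 0 t, h z = 0 := by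
      have hsub := intermediate_value_Icc' ht hch.continuousOn
      have : (0 : ℝ) ∈ Set.Icc (h t) (h 0) := ⟨hc, le_of_lt h0⟩
      obtain ⟨z, hz1, hz2⟩ := hsub this
      exact ⟨z, hz1, hz2⟩
    obtain ⟨z, hz1, hz2⟩ := hzt
    have : T ≤ z := csInf_le hSbdd ⟨hz1.1, hz2⟩
    linarith [hz1.2]
  -- Lipschitz constant near 0
  obtain ⟨K, s, hsnhds, hK⟩ := hαlip 0
  obtain ⟨ε, hε, hball⟩ := Metric.mem_nhds_iff.1 hsnhds
  have h0s : (0 : ℝ) ∈ s := mem_of_mem_nhds hsnhds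
  have hαbound : ∀ y : ℝ, 0 ≤ y → y < ε → α y ≤ K * y := by
    intro y hy hyε
    have hys : y ∈ s := hball (by simp [Metric.mem_ball, Real.dist_eq, abs_of_nonneg hy, hyε])
    have := hK.dist_le_mul y hys 0 h0s
    rw [Real.dist_eq, Real.dist_eq, hα0, sub_zero, sub_zero, abs_of_nonneg hy] at this
    calc α y ≤ |α y| := le_abs_self _
    _ ≤ K * y := this
  -- choose s₀ close to T
  obtain ⟨δ, hδ, hδ'⟩ := Metric.continuousAt_iff.1 (hch.continuousAt (x := T)) ε hε
  set s₀ := max (T - δ/2) (T/2) with hs₀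
  have hs₀nn : 0 ≤ s₀ := le_max_of_le_right (by linarith)
  have hs₀lt : s₀ < T := by
    apply max_lt <;> linarith
  have hsmall : ∀ t ∈ Set.Icc s₀ T, |h t| < ε := by
    intro t ht
    have h1 : T - δ/2 ≤ s₀ := le_max_left _ _
    have : dist t T < δ := by
      rw [Real.dist_eq, abs_of_nonpos (by linarith [ht.2])]
      linarith [ht.1, ht.2]
    have := hδ' this
    rwa [Real.dist_eq, hT0, sub_zero] at this
  have hnn : ∀ t ∈ Set.Icc s₀ T, 0 ≤ h t := by
    intro t ht
    rcases lt_or_eq_of_le ht.2 with h1 | h1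
    · exact le_of_lt (hpos t (le_trans hs₀nn ht.1) h1)
    · rw [h1, hT0]
  -- define g and show it is monotone
  set g : ℝ → ℝ := fun t => h t * Real.exp (K * t) with hg
  have hgderiv : ∀ t, HasDerivAt g (h' t * Real.exp (K * t) + h t * (Real.exp (K * t) * K)) t := by
    intro t
    have he : HasDerivAt (fun u => Real.exp ((K : ℝ) * u)) (Real.exp ((K : ℝ) * t) * K) t := by
      have := (Real.hasDerivAt_exp ((K : ℝ) * t)).comp t ((hasDerivAt_id t).const_mul (K : ℝ))
      simpa [Function.comp_def, mul_one] using this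
    exact (hderiv t).mul he
  have hmono : MonotoneOn g (Set.Icc s₀ T) := by
    apply monotoneOn_of_deriv_nonneg (convex_Icc s₀ T)
    · exact (hch.mul ((Real.continuous_exp.comp (continuous_const.mul continuous_id)))).continuousOn
    · intro x hx
      exact (hgderiv x).differentiableAt.differentiableWithinAt
    · intro x hx
      rw [interior_Icc] at hx
      rw [(hgderiv x).deriv]
      have hx0 : 0 ≤ x := le_trans hs₀nn (le_of_lt hx.1)
      have hhx : 0 ≤ h x := hnn x ⟨le_of_lt hx.1, le_of_lt hx.2⟩
      have hhxε : h x < ε := lt_of_abs_lt (hsmall x ⟨le_of_lt hx.1, le_of_lt hx.2⟩)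
      have h1 : α (h x) ≤ K * h x := hαbound _ hhx hhxε
      have h2 : -(K * h x) ≤ h' x := le_trans (by linarith) (hineq x hx0)
      have hexp : 0 < Real.exp (K * x) := Real.exp_pos _
      nlinarith
  have hle' : g s₀ ≤ g T := hmono ⟨le_refl _, le_of_lt hs₀lt⟩ ⟨le_of_lt hs₀lt, le_refl _⟩ (le_of_lt hs₀lt)
  have hgT : g T = 0 := by simp [hg, hT0]
  have hgs₀ : 0 < g s₀ :=
    mul_pos (hpos s₀ hs₀nn hs₀lt) (Real.exp_pos _)
  linarith
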